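/- Let β ∈ ℂ with Re β > 0 and n ∈ ℕ₀, and let k^γ denote the Cesàro kernel. For any sequence f: ℕ₀ → ℂ, the generalized Cesàro operator satisfies the subordination formula (1/k^{β+1}(n)) ∑_{j=0}^n k^β(n-j) f(j) = β ∫_0^∞ (1-e^{-t})^{β-1} e^{-t} ∑_{j=0}^n C(n,j) e^{-tj}(1-e^{-t})^{n-j} f(j) dt. -/

import Mathlib

open MeasureTheory
open scoped Nat

lemma image_aux : (fun t : ℝ => 1 - Real.exp (-t)) '' Set.Ioi 0 = Set.Ioo 0 1 := by
  ext x
  constructor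
  · rintro ⟨t, ht, rfl⟩
    have ht' : (0:ℝ) < t := ht
    have h1 : Real.exp (-t) < 1 := Real.exp_lt_one_iff.mpr (by linarith)
    have h2 : 0 < Real.exp (-t) := Real.exp_pos _
    exact ⟨by simpa using h1, by simpa using h2⟩
  · rintro ⟨h0, h1⟩
    refine ⟨-Real.log (1 - x), ?_, ?_⟩
    · have : Real.log (1 - x) < 0 := Real.log_neg (by linarith) (by linarith)
      simpa using this
    · simp [Real.exp_log (by linarith : (0:ℝ) < 1 - x)]

lemma key_integral (u : ℂ) (hu : 0 < u.re) (j : ℕ) :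
    IntegrableOn (fun t : ℝ =>
        ((1 - Real.exp (-t) : ℝ) : ℂ) ^ (u - 1) * (Real.exp (-t) : ℂ) ^ (j + 1))
      (Set.Ioi (0:ℝ)) volume ∧
    (∫ t in Set.Ioi (0:ℝ),
        ((1 - Real.exp (-t) : ℝ) : ℂ) ^ (u - 1) * (Real.exp (-t) : ℂ) ^ (j + 1))
      = Complex.betaIntegral u ((j : ℂ) + 1) := by
  have hv : 0 < ((j : ℂ) + 1).re := by simp; positivity
  set g : ℝ → ℂ := fun x => (x : ℂ) ^ (u - 1) * (1 - (x : ℂ)) ^ (((j : ℂ) + 1) - 1) with hg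
  have hderiv : ∀ t ∈ Set.Ioi (0:ℝ),
      HasDerivWithinAt (fun t : ℝ => 1 - Real.exp (-t)) (Real.exp (-t)) (Set.Ioi 0) t := by
    intro t _
    have h1 : HasDerivAt (fun t : ℝ => Real.exp (-t)) (Real.exp (-t) * (-1)) t :=
      (Real.hasDerivAt_exp (-t)).comp t (hasDerivAt_neg t)
    have h2 : HasDerivAt (fun t : ℝ => 1 - Real.exp (-t)) (0 - Real.exp (-t) * (-1)) t :=
      (hasDerivAt_const t 1).sub h1
    simpa using h2.hasDerivWithinAt
  have hinj : Set.InjOn (fun t : ℝ => 1 - Real.exp (-t)) (Set.Ioi 0) := by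
    intro a _ b _ h
    have : Real.exp (-a) = Real.exp (-b) := by dsimp at h; linarith
    have := Real.exp_injective this
    linarith
  have hpt : ∀ t ∈ Set.Ioi (0:ℝ),
      |Real.exp (-t)| • g (1 - Real.exp (-t))
        = ((1 - Real.exp (-t) : ℝ) : ℂ) ^ (u - 1) * (Real.exp (-t) : ℂ) ^ (j + 1) := by
    intro t _
    have h1 : (1 : ℂ) - ((1 - Real.exp (-t) : ℝ) : ℂ) = (Real.exp (-t) : ℂ) := by
      push_cast; ring
    have h2 : ((j : ℂ) + 1) - 1 = (j : ℂ) := by ring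
    rw [hg]
    simp only [h1, h2, Complex.cpow_natCast, abs_of_pos (Real.exp_pos (-t)),
      Complex.real_smul]
    push_cast
    ring
  have hbeta : Complex.betaIntegral u ((j : ℂ) + 1) = ∫ x in Set.Ioo (0:ℝ) 1, g x := by
    rw [Complex.betaIntegral, intervalIntegral.integral_of_le (by norm_num : (0:ℝ) ≤ 1),
      MeasureTheory.integral_Ioc_eq_integral_Ioo]
  have hint0 : IntegrableOn g (Set.Ioo (0:ℝ) 1) volume := by
    have := (Complex.betaIntegral_convergent hu hv)
    rw [intervalIntegrable_iff_integrableOn_Ioc_of_le (by norm_num : (0:ℝ) ≤ 1)] at this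
    exact this.mono_set Set.Ioo_subset_Ioc_self
  have himg := image_aux
  constructor
  · have := (integrableOn_image_iff_integrableOn_abs_deriv_smul measurableSet_Ioi hderiv hinj g).mp
      (by rw [himg]; exact hint0)
    exact (this.congr_fun hpt measurableSet_Ioi)
  · rw [hbeta, ← himg,
      integral_image_eq_integral_abs_deriv_smul measurableSet_Ioi hderiv hinj g]
    exact MeasureTheory.setIntegral_congr_fun measurableSet_Ioi (fun t ht => (hpt t ht).symm)

/-- The Cesàro kernel of complex order. -/
noncomputable def cK (γ : ℂ) (k : ℕ) : ℂ :=
  Complex.Gamma (k + γ) / (Complex.Gamma γ * Complex.Gamma (k + 1))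

/-- Subordination formula for the generalized Cesàro operator `C_β`. -/
theorem stmt19 (β : ℂ) (hβ : 0 < β.re) (n : ℕ) (f : ℕ → ℂ) :
    (1 / cK (β + 1) n) * ∑ j ∈ Finset.range (n + 1), cK β (n - j) * f j
    = β * ∫ t in Set.Ioi (0 : ℝ),
        ((1 - Real.exp (-t) : ℝ) : ℂ) ^ (β - 1) * (Real.exp (-t) : ℂ) *
          ∑ j ∈ Finset.range (n + 1),
            (n.choose j : ℂ) * (Real.exp (-t) : ℂ) ^ j *
              (1 - (Real.exp (-t) : ℂ)) ^ (n - j) * f j := by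
  set u : ℕ → ℂ := fun j => β + ((n - j : ℕ) : ℂ) with hu_def
  have hu : ∀ j, 0 < (u j).re := by
    intro j
    simp only [hu_def, Complex.add_re, Complex.natCast_re]
    positivity
  -- Step 1: compute the integral
  have hcongr : (∫ t in Set.Ioi (0 : ℝ),
        ((1 - Real.exp (-t) : ℝ) : ℂ) ^ (β - 1) * (Real.exp (-t) : ℂ) *
          ∑ j ∈ Finset.range (n + 1),
            (n.choose j : ℂ) * (Real.exp (-t) : ℂ) ^ j *
              (1 - (Real.exp (-t) : ℂ)) ^ (n - j) * f j)
      = ∑ j ∈ Finset.range (n + 1),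
          (n.choose j : ℂ) * f j * Complex.betaIntegral (u j) ((j : ℂ) + 1) := by
    have hpt2 : Set.EqOn
        (fun t : ℝ => ((1 - Real.exp (-t) : ℝ) : ℂ) ^ (β - 1) * (Real.exp (-t) : ℂ) *
          ∑ j ∈ Finset.range (n + 1),
            (n.choose j : ℂ) * (Real.exp (-t) : ℂ) ^ j *
              (1 - (Real.exp (-t) : ℂ)) ^ (n - j) * f j)
        (fun t : ℝ => ∑ j ∈ Finset.range (n + 1), (n.choose j : ℂ) * f j *
          (((1 - Real.exp (-t) : ℝ) : ℂ) ^ (u j - 1) * (Real.exp (-t) : ℂ) ^ (j + 1)))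
        (Set.Ioi 0) := by
      intro t ht
      have ht' : (0:ℝ) < t := ht
      have hlt : Real.exp (-t) < 1 := Real.exp_lt_one_iff.mpr (by linarith)
      have hne : ((1 - Real.exp (-t) : ℝ) : ℂ) ≠ 0 := by
        simp only [ne_eq, Complex.ofReal_eq_zero]
        linarith
      simp only [Finset.mul_sum]
      refine Finset.sum_congr rfl fun j _ => ?_
      have hexp : β - 1 + ((n - j : ℕ) : ℂ) = u j - 1 := by rw [hu_def]; ring
      have hcast : (1 - (Real.exp (-t) : ℂ)) = ((1 - Real.exp (-t) : ℝ) : ℂ) := by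
        push_cast; ring
      rw [hcast, ← Complex.cpow_natCast (((1 - Real.exp (-t) : ℝ) : ℂ)) (n - j)]
      calc ((1 - Real.exp (-t) : ℝ) : ℂ) ^ (β - 1) * (Real.exp (-t) : ℂ) *
            ((n.choose j : ℂ) * (Real.exp (-t) : ℂ) ^ j *
              ((1 - Real.exp (-t) : ℝ) : ℂ) ^ ((n - j : ℕ) : ℂ) * f j)
          = (n.choose j : ℂ) * f j *
            ((((1 - Real.exp (-t) : ℝ) : ℂ) ^ (β - 1) *
              ((1 - Real.exp (-t) : ℝ) : ℂ) ^ ((n - j : ℕ) : ℂ)) *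
              (Real.exp (-t) : ℂ) ^ (j + 1)) := by ring
        _ = _ := by rw [← Complex.cpow_add _ _ hne, hexp]
    rw [MeasureTheory.setIntegral_congr_fun measurableSet_Ioi hpt2,
      MeasureTheory.integral_finset_sum _ (fun j _ =>
        ((key_integral (u j) (hu j) j).1.const_mul ((n.choose j : ℂ) * f j)))]
    refine Finset.sum_congr rfl fun j _ => ?_
    rw [MeasureTheory.integral_const_mul, (key_integral (u j) (hu j) j).2]
  rw [hcongr, Finset.mul_sum, Finset.mul_sum]
  refine Finset.sum_congr rfl fun j hj => ?_
  have hjn : j ≤ n := Nat.lt_succ_iff.mp (Finset.mem_range.mp hj)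
  set m : ℕ := n - j with hm
  have hmn : (m : ℂ) + (j : ℂ) = (n : ℂ) := by
    have : m + j = n := Nat.sub_add_cancel hjn
    exact_mod_cast congrArg (Nat.cast : ℕ → ℂ) this
  have hv : 0 < ((j : ℂ) + 1).re := by simp; positivity
  have hB := Complex.Gamma_mul_Gamma_eq_betaIntegral (hu j) hv
  have hβ0 : β ≠ 0 := by
    intro h; rw [h] at hβ; simp at hβ
  have hGβ : Complex.Gamma β ≠ 0 := Complex.Gamma_ne_zero_of_re_pos hβ
  have harg : u j + ((j : ℂ) + 1) = (n : ℂ) + (β + 1) := by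
    rw [hu_def]; dsimp only; rw [← hmn]; push_cast; ring
  have hGtop : Complex.Gamma ((n : ℂ) + (β + 1)) ≠ 0 := by
    apply Complex.Gamma_ne_zero_of_re_pos
    simp only [Complex.add_re, Complex.natCast_re, Complex.one_re]
    positivity
  rw [harg] at hB
  have hBval : Complex.betaIntegral (u j) ((j : ℂ) + 1)
      = Complex.Gamma (u j) * Complex.Gamma ((j : ℂ) + 1)
        / Complex.Gamma ((n : ℂ) + (β + 1)) := by
    rw [eq_div_iff hGtop]
    linear_combination -hB
  rw [hBval]
  have h1 : Complex.Gamma ((m : ℂ) + 1) = (m ! : ℂ) := Complex.Gamma_nat_eq_factorial m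
  have h2 : Complex.Gamma ((n : ℂ) + 1) = (n ! : ℂ) := Complex.Gamma_nat_eq_factorial n
  have h3 : Complex.Gamma ((j : ℂ) + 1) = (j ! : ℂ) := Complex.Gamma_nat_eq_factorial j
  have h4 : Complex.Gamma (β + 1) = β * Complex.Gamma β := Complex.Gamma_add_one β hβ0
  have h5 : Complex.Gamma (u j) = Complex.Gamma ((m : ℂ) + β) := by
    congr 1
    rw [hu_def]; dsimp only; rw [← hm]; ring
  have hchoose : (n.choose j : ℂ) * (j ! : ℂ) * (m ! : ℂ) = (n ! : ℂ) := by
    rw [hm]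
    exact_mod_cast congrArg (Nat.cast : ℕ → ℂ)
      (Nat.choose_mul_factorial_mul_factorial hjn)
  have hm' : (m ! : ℂ) ≠ 0 := Nat.cast_ne_zero.mpr (Nat.factorial_ne_zero m)
  have hn' : (n ! : ℂ) ≠ 0 := Nat.cast_ne_zero.mpr (Nat.factorial_ne_zero n)
  have hj' : (j ! : ℂ) ≠ 0 := Nat.cast_ne_zero.mpr (Nat.factorial_ne_zero j)
  simp only [cK, ← hm, h1, h2, h3, h4, h5]
  field_simp
  linear_combination (-(Complex.Gamma ((m : ℂ) + β) * f j)) * hchoose
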